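/- Let A₁, A₂ ⊆ E be nonempty finite sets and let λ ≥ 0. Then the outer critical set Crit_out(Φ_λ) = {x ∈ E : 0 ∈ G_λ(x)} is finite. -/
import Mathlib


open MeasureTheory Metric Filter Topology

/-- The set `Π_A(x)` of nearest points of `x` in `A`. -/
def nearestPts {d : ℕ} (A : Set (EuclideanSpace ℝ (Fin d)))
    (x : EuclideanSpace ℝ (Fin d)) : Set (EuclideanSpace ℝ (Fin d)) :=
  {a ∈ A | ‖x - a‖ = Metric.infDist x A}

/-- The outer-Clarke field
`G_λ(z) = conv {2λ(z-a₁) + 2(1-λ)(z-a₂) : a₁ ∈ Π_{A₁}(z), a₂ ∈ Π_{A₂}(z)}`. -/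
noncomputable def outerClarkeField {d : ℕ} (A₁ A₂ : Set (EuclideanSpace ℝ (Fin d))) (lam : ℝ)
    (z : EuclideanSpace ℝ (Fin d)) : Set (EuclideanSpace ℝ (Fin d)) :=
  convexHull ℝ
    (Set.image2 (fun a₁ a₂ => (2 * lam) • (z - a₁) + (2 * (1 - lam)) • (z - a₂))
      (nearestPts A₁ z) (nearestPts A₂ z))

local notation "⟪" x ", " y "⟫" => @inner ℝ _ _ x y

/-- If `w` is equidistant to `a` and `a'`, the inner products differ by a fixed amount. -/
lemma inner_eq_of_norm_sub_eq {d : ℕ} (w a a' : EuclideanSpace ℝ (Fin d))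
    (h : ‖w - a‖ = ‖w - a'‖) : ⟪w, a⟫ - ⟪w, a'⟫ = (‖a‖ ^ 2 - ‖a'‖ ^ 2) / 2 := by
  have h2 : ‖w - a‖ ^ 2 = ‖w - a'‖ ^ 2 := by rw [h]
  rw [norm_sub_sq_real, norm_sub_sq_real] at h2
  linarith

theorem outer_critical_set_finite
    (d : ℕ) (hd : 1 ≤ d)
    (A₁ A₂ : Set (EuclideanSpace ℝ (Fin d)))
    (hA₁ : A₁.Nonempty) (hA₂ : A₂.Nonempty)
    (hA₁fin : A₁.Finite) (hA₂fin : A₂.Finite)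
    (lam : ℝ) (hlam : 0 ≤ lam) :
    {x : EuclideanSpace ℝ (Fin d) | 0 ∈ outerClarkeField A₁ A₂ lam x}.Finite := by
  classical
  set F : EuclideanSpace ℝ (Fin d) → Set (EuclideanSpace ℝ (Fin d)) × Set (EuclideanSpace ℝ (Fin d)) := fun z => (nearestPts A₁ z, nearestPts A₂ z) with hFdef
  apply Set.Finite.of_finite_image (f := F)
  · apply Set.Finite.subset (hA₁fin.finite_subsets.prod hA₂fin.finite_subsets)
    rintro p ⟨w, _, rfl⟩
    exact ⟨fun a ha => ha.1, fun a ha => ha.1⟩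
  · intro z hz z' hz' heq
    simp only [Set.mem_setOf_eq] at hz hz'
    have h1 : nearestPts A₁ z = nearestPts A₁ z' := congrArg Prod.fst heq
    have h2 : nearestPts A₂ z = nearestPts A₂ z' := congrArg Prod.snd heq
    set P₁ := nearestPts A₁ z with hP₁
    set P₂ := nearestPts A₂ z with hP₂
    -- nearest point sets are nonempty
    have hne₁ : P₁.Nonempty := by
      obtain ⟨a, ha, hda⟩ := hA₁fin.isCompact.exists_infDist_eq_dist hA₁ z
      exact ⟨a, ha, by rw [← dist_eq_norm]; exact hda.symm⟩
    have hne₂ : P₂.Nonempty := by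
      obtain ⟨a, ha, hda⟩ := hA₂fin.isCompact.exists_infDist_eq_dist hA₂ z
      exact ⟨a, ha, by rw [← dist_eq_norm]; exact hda.symm⟩
    obtain ⟨b₁, hb₁⟩ := hne₁
    obtain ⟨b₂, hb₂⟩ := hne₂
    -- the span of differences within P₁ and within P₂
    set D : Set (EuclideanSpace ℝ (Fin d)) := (fun p : EuclideanSpace ℝ (Fin d) × EuclideanSpace ℝ (Fin d) => p.1 - p.2) '' (P₁ ×ˢ P₁ ∪ P₂ ×ˢ P₂) with hD
    set V : Submodule ℝ (EuclideanSpace ℝ (Fin d)) := Submodule.span ℝ D with hV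
    -- key membership: the representative outer-Clarke vector lies in V
    have mem_key : ∀ w : EuclideanSpace ℝ (Fin d), 0 ∈ outerClarkeField A₁ A₂ lam w →
        nearestPts A₁ w = P₁ → nearestPts A₂ w = P₂ →
        (2 * lam) • (w - b₁) + (2 * (1 - lam)) • (w - b₂) ∈ V := by
      intro w hw e1 e2
      set g₀ : EuclideanSpace ℝ (Fin d) := (2 * lam) • (w - b₁) + (2 * (1 - lam)) • (w - b₂) with hg₀
      have hw' : (0 : EuclideanSpace ℝ (Fin d)) ∈ convexHull ℝ
          (Set.image2 (fun a₁ a₂ => (2 * lam) • (w - a₁) + (2 * (1 - lam)) • (w - a₂)) P₁ P₂) := by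
        rw [outerClarkeField, e1, e2] at hw
        exact hw
      have hsub : Set.image2 (fun a₁ a₂ => (2 * lam) • (w - a₁) + (2 * (1 - lam)) • (w - a₂)) P₁ P₂
          ⊆ {u : EuclideanSpace ℝ (Fin d) | g₀ - u ∈ V} := by
        rintro u ⟨a₁, ha₁, a₂, ha₂, rfl⟩
        have g1 : a₁ - b₁ ∈ V := Submodule.subset_span ⟨(a₁, b₁), Or.inl ⟨ha₁, hb₁⟩, rfl⟩
        have g2 : a₂ - b₂ ∈ V := Submodule.subset_span ⟨(a₂, b₂), Or.inr ⟨ha₂, hb₂⟩, rfl⟩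
        have hid : g₀ - ((2 * lam) • (w - a₁) + (2 * (1 - lam)) • (w - a₂))
            = (2 * lam) • (a₁ - b₁) + (2 * (1 - lam)) • (a₂ - b₂) := by
          rw [hg₀]; module
        rw [Set.mem_setOf_eq, hid]
        exact V.add_mem (V.smul_mem _ g1) (V.smul_mem _ g2)
      have hconv : Convex ℝ {u : EuclideanSpace ℝ (Fin d) | g₀ - u ∈ V} := by
        intro x hx y hy a b ha hb hab
        have key : g₀ - (a • x + b • y) = a • (g₀ - x) + b • (g₀ - y) := by
          have h' : a • (g₀ - x) + b • (g₀ - y) = (a + b) • g₀ - (a • x + b • y) := by module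
          rw [h', hab, one_smul]
        show g₀ - _ ∈ V
        rw [key]
        exact V.add_mem (V.smul_mem _ hx) (V.smul_mem _ hy)
      have h0 : (0 : EuclideanSpace ℝ (Fin d)) ∈ {u : EuclideanSpace ℝ (Fin d) | g₀ - u ∈ V} := convexHull_min hsub hconv hw'
      simpa using h0
    have hz1 := mem_key z hz rfl rfl
    have hz2 := mem_key z' hz' h1.symm h2.symm
    have hdiff : (2 : ℝ) • (z - z') ∈ V := by
      have hs := V.sub_mem hz1 hz2
      have e : ((2 * lam) • (z - b₁) + (2 * (1 - lam)) • (z - b₂))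
          - ((2 * lam) • (z' - b₁) + (2 * (1 - lam)) • (z' - b₂)) = (2 : ℝ) • (z - z') := by
        module
      rwa [e] at hs
    have hzz : z - z' ∈ V := by
      have hs := V.smul_mem (2⁻¹ : ℝ) hdiff
      rwa [smul_smul, inv_mul_cancel₀ (two_ne_zero), one_smul] at hs
    -- orthogonality of z - z' to all generators of V
    have horthD : D ⊆ ((Submodule.span ℝ {z - z'} : Submodule ℝ (EuclideanSpace ℝ (Fin d)))ᗮ : Set (EuclideanSpace ℝ (Fin d))) := by
      rintro v ⟨⟨a, a'⟩, hmem, rfl⟩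
      rw [SetLike.mem_coe, Submodule.mem_orthogonal_singleton_iff_inner_right]
      have hinner : ∀ (haz : ‖z - a‖ = ‖z - a'‖) (haz' : ‖z' - a‖ = ‖z' - a'‖),
          ⟪z - z', a - a'⟫ = (0 : ℝ) := by
        intro haz haz'
        have e1 := inner_eq_of_norm_sub_eq z a a' haz
        have e2 := inner_eq_of_norm_sub_eq z' a a' haz'
        have expand : ⟪z - z', a - a'⟫
            = (⟪z, a⟫ - ⟪z, a'⟫) - (⟪z', a⟫ - ⟪z', a'⟫) := by
          simp only [inner_sub_left, inner_sub_right]; ring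
        rw [expand, e1, e2]; ring
      rcases hmem with hmem | hmem
      · have ha : a ∈ P₁ := hmem.1
        have ha' : a' ∈ P₁ := hmem.2
        have haz : ‖z - a‖ = ‖z - a'‖ := by rw [ha.2, ha'.2]
        have haz' : ‖z' - a‖ = ‖z' - a'‖ := by
          have ha2 : a ∈ nearestPts A₁ z' := h1 ▸ ha
          have ha2' : a' ∈ nearestPts A₁ z' := h1 ▸ ha'
          rw [ha2.2, ha2'.2]
        exact hinner haz haz'
      · have ha : a ∈ P₂ := hmem.1
        have ha' : a' ∈ P₂ := hmem.2
        have haz : ‖z - a‖ = ‖z - a'‖ := by rw [ha.2, ha'.2]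
        have haz' : ‖z' - a‖ = ‖z' - a'‖ := by
          have ha2 : a ∈ nearestPts A₂ z' := h2 ▸ ha
          have ha2' : a' ∈ nearestPts A₂ z' := h2 ▸ ha'
          rw [ha2.2, ha2'.2]
        exact hinner haz haz'
    have hVle : V ≤ (Submodule.span ℝ {z - z'} : Submodule ℝ (EuclideanSpace ℝ (Fin d)))ᗮ :=
      Submodule.span_le.mpr horthD
    have hmem := hVle hzz
    rw [Submodule.mem_orthogonal_singleton_iff_inner_right] at hmem
    have : z - z' = 0 := inner_self_eq_zero.mp hmem
    exact sub_eq_zero.mp this
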